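/- One minus the Tanimoto similarity, d(A,B) = 1 − |A∩B|/|A∪B|, is a metric on finite sets (the Jaccard distance): it is nonnegative, symmetric, vanishes exactly on equal sets, and satisfies the triangle inequality d(A,C) ≤ d(A,B) + d(B,C). -/
import Mathlib

open Finset

/-- Jaccard distance (one minus Tanimoto similarity), with `d(∅,∅) = 0`. -/
noncomputable def jaccardDist {α : Type*} [DecidableEq α] (A B : Finset α) : ℝ :=
  if A ∪ B = ∅ then 0 else 1 - ((A ∩ B).card : ℝ) / (A ∪ B).card

section aux
variable {α : Type*} [DecidableEq α]

lemma jd_sd_card (A B : Finset α) :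
    ((A \ B) ∪ (B \ A)).card + (A ∩ B).card = (A ∪ B).card := by
  rw [← Finset.card_union_of_disjoint (by
    rw [Finset.disjoint_left]; intro x; simp only [Finset.mem_union, Finset.mem_sdiff,
      Finset.mem_inter]; tauto)]
  congr 1
  ext x
  simp only [Finset.mem_union, Finset.mem_sdiff, Finset.mem_inter]
  tauto

lemma jd_eq (A B : Finset α) (h : A ∪ B ≠ ∅) :
    jaccardDist A B = (((A \ B) ∪ (B \ A)).card : ℝ) / (A ∪ B).card := by
  have hu : 0 < ((A ∪ B).card : ℝ) := by
    exact_mod_cast Finset.card_pos.mpr (Finset.nonempty_iff_ne_empty.mpr h)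
  have hc : (((A \ B) ∪ (B \ A)).card : ℝ) + (A ∩ B).card = (A ∪ B).card := by
    exact_mod_cast jd_sd_card A B
  rw [jaccardDist, if_neg h]
  field_simp
  linarith

lemma jd_nonneg (A B : Finset α) : 0 ≤ jaccardDist A B := by
  by_cases h : A ∪ B = ∅
  · simp [jaccardDist, h]
  · rw [jd_eq A B h]
    positivity

end aux

/-- The Jaccard distance is a metric on finite sets: nonnegative, symmetric, vanishing
exactly on equal sets, and satisfying the triangle inequality. -/
theorem stmt13 {α : Type*} [DecidableEq α] (A B C : Finset α) :
    0 ≤ jaccardDist A B ∧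
      jaccardDist A B = jaccardDist B A ∧
      (jaccardDist A B = 0 ↔ A = B) ∧
      jaccardDist A C ≤ jaccardDist A B + jaccardDist B C := by
  refine ⟨jd_nonneg A B, ?_, ?_, ?_⟩
  · unfold jaccardDist
    rw [Finset.union_comm B A, Finset.inter_comm B A]
  · by_cases h : A ∪ B = ∅
    · rw [Finset.union_eq_empty] at h
      simp [jaccardDist, Finset.union_eq_empty, h.1, h.2]
    · rw [jd_eq A B h]
      have hu : 0 < ((A ∪ B).card : ℝ) := by
        exact_mod_cast Finset.card_pos.mpr (Finset.nonempty_iff_ne_empty.mpr h)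
      constructor
      · intro h0
        have hnum : (((A \ B) ∪ (B \ A)).card : ℝ) = 0 := by
          rcases div_eq_zero_iff.mp h0 with h1 | h1
          · exact h1
          · exact absurd h1 (ne_of_gt hu)
        have hsd : ((A \ B) ∪ (B \ A)) = ∅ := by
          rw [← Finset.card_eq_zero]; exact_mod_cast hnum
        ext x
        have h1 := Finset.eq_empty_iff_forall_notMem.mp hsd x
        simp only [Finset.mem_union, Finset.mem_sdiff] at h1
        constructor <;> intro hx <;> by_contra hc <;> tauto
      · intro hAB
        subst hAB
        simp
  · -- triangle inequality
    by_cases hAC : A ∪ C = ∅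
    · rw [jaccardDist, if_pos hAC]
      have := jd_nonneg A B
      have := jd_nonneg B C
      linarith
    · by_cases hAB : A ∪ B = ∅
      · rw [Finset.union_eq_empty] at hAB
        obtain ⟨h1, h2⟩ := hAB
        subst h1; subst h2
        simp [jaccardDist]
      · by_cases hBC : B ∪ C = ∅
        · rw [Finset.union_eq_empty] at hBC
          obtain ⟨hB, hC⟩ := hBC
          subst hB; subst hC
          have h0 : jaccardDist (∅ : Finset α) ∅ = 0 := by simp [jaccardDist]
          rw [h0]
          simp
        · -- main case
          rw [jd_eq A C hAC, jd_eq A B hAB, jd_eq B C hBC]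
          set a : ℕ := ((A \ C) ∪ (C \ A)).card with ha
          set b : ℕ := ((A \ B) ∪ (B \ A)).card with hb
          set c : ℕ := ((B \ C) ∪ (C \ B)).card with hc
          set t : ℕ := (B \ (A ∪ C)).card with ht
          set u : ℕ := (A ∪ C).card with hu
          set v : ℕ := (A ∪ B).card with hv
          set w : ℕ := (B ∪ C).card with hw
          set m : ℕ := (A ∪ B ∪ C).card with hm
          have key1 : a + t ≤ b + c := by
            calc a + t = (((A \ C) ∪ (C \ A)) ∪ (B \ (A ∪ C))).card := by
                  rw [Finset.card_union_of_disjoint]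
                  rw [Finset.disjoint_left]; intro x
                  simp only [Finset.mem_union, Finset.mem_sdiff]; tauto
              _ ≤ (((A \ B) ∪ (B \ A)) ∪ ((B \ C) ∪ (C \ B))).card := by
                  apply Finset.card_le_card
                  intro x
                  simp only [Finset.mem_union, Finset.mem_sdiff]
                  tauto
              _ ≤ b + c := Finset.card_union_le _ _
          have key2 : u + t = m := by
            rw [← Finset.card_union_of_disjoint (by
              rw [Finset.disjoint_left]; intro x
              simp only [Finset.mem_union, Finset.mem_sdiff]; tauto)]
            congr 1
            ext x
            simp only [Finset.mem_union, Finset.mem_sdiff]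
            tauto
          have hau : a ≤ u := by
            apply Finset.card_le_card
            intro x
            simp only [Finset.mem_union, Finset.mem_sdiff]
            tauto
          have hvm : v ≤ m := Finset.card_le_card (by
            intro x; simp only [Finset.mem_union]; tauto)
          have hwm : w ≤ m := Finset.card_le_card (by
            intro x; simp only [Finset.mem_union]; tauto)
          have hupos : 0 < (u : ℝ) := by
            exact_mod_cast Finset.card_pos.mpr (Finset.nonempty_iff_ne_empty.mpr hAC)
          have hvpos : 0 < (v : ℝ) := by
            exact_mod_cast Finset.card_pos.mpr (Finset.nonempty_iff_ne_empty.mpr hAB)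
          have hwpos : 0 < (w : ℝ) := by
            exact_mod_cast Finset.card_pos.mpr (Finset.nonempty_iff_ne_empty.mpr hBC)
          have hmpos : 0 < (m : ℝ) := by
            have : u ≤ m := by omega
            have : (u:ℝ) ≤ m := by exact_mod_cast this
            linarith
          have hkey2 : (u : ℝ) + t = m := by exact_mod_cast key2
          have hkey1 : (a : ℝ) + t ≤ b + c := by exact_mod_cast key1
          have hau' : (a : ℝ) ≤ u := by exact_mod_cast hau
          have htn : (0:ℝ) ≤ t := by positivity
          calc (a : ℝ) / u ≤ ((a:ℝ) + t) / m := by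
                rw [div_le_div_iff₀ hupos hmpos]
                nlinarith
            _ ≤ ((b:ℝ) + c) / m := by gcongr
            _ = (b:ℝ)/m + (c:ℝ)/m := by ring
            _ ≤ (b:ℝ)/v + (c:ℝ)/w := by
                gcongr
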